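/- Let G be a finite group acting faithfully and transitively on a finite set Ω with point stabilizer G_ω, and let h ∈ G be an element such that the cyclic subgroup H = ⟨h⟩ has exactly two orbits on Ω. If K ∈ L(G_ω,G) is H-intransitive (i.e. K·⟨h⟩ ≠ G as subsets of G), then K is core-complementary: K = G_ω · core_G(K) as subsets of G. Equivalently, every H-intransitive imprimitivity system of G is normal, i.e. its blocks are the orbits of a normal subgroup of G. -/

import Mathlib

open Pointwise

section Aux

variable {G Ω : Type*} [Group G] [MulAction G Ω]

lemma aux_stabilizer_subgroupOf (X : Subgroup G) (x : Ω) :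
    MulAction.stabilizer X x = (MulAction.stabilizer G x).subgroupOf X := by
  ext g; simp [MulAction.mem_stabilizer_iff, Subgroup.mem_subgroupOf, Subgroup.smul_def]

lemma aux_card_stabilizer (X : Subgroup G) (x : Ω) :
    Nat.card (MulAction.stabilizer X x) = Nat.card ↥(X ⊓ MulAction.stabilizer G x) := by
  rw [aux_stabilizer_subgroupOf, ← Subgroup.inf_subgroupOf_left]
  exact Nat.card_congr (Subgroup.subgroupOfEquivOfLe inf_le_left).toEquiv

/-- Orbit–stabilizer with `Nat.card`. -/
lemma aux_orbit_stabilizer (X : Subgroup G) (x : Ω) :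
    Nat.card (MulAction.orbit X x) * Nat.card ↥(X ⊓ MulAction.stabilizer G x) = Nat.card X := by
  rw [← aux_card_stabilizer]
  have := (Nat.card_congr (MulAction.orbitProdStabilizerEquivGroup X x))
  simpa [Nat.card_prod] using this

lemma aux_card_smul_set (g : G) (s : Set Ω) : Nat.card ↥(g • s) = Nat.card ↥s := by
  rw [Nat.card_coe_set_eq, Nat.card_coe_set_eq, ← Set.image_smul]
  exact Set.ncard_image_of_injective s (MulAction.injective g)

/-- `Nat.card (M ⊔ Z) = Nat.card M * M.relIndex Z` for `M` normal. -/
lemma aux_card_sup (M Z : Subgroup G) [M.Normal] :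
    Nat.card ↥(M ⊔ Z) = Nat.card M * M.relIndex Z := by
  have h1 : Nat.card (M.subgroupOf (M ⊔ Z)) * (M.subgroupOf (M ⊔ Z)).index
      = Nat.card ↥(M ⊔ Z) := Subgroup.card_mul_index _
  have h2 : Nat.card (M.subgroupOf (M ⊔ Z)) = Nat.card M :=
    Nat.card_congr (Subgroup.subgroupOfEquivOfLe le_sup_left).toEquiv
  have h3 : (M.subgroupOf (M ⊔ Z)).index = M.relIndex Z := Subgroup.relIndex_sup_left Z M
  rw [← h1, h2, h3]

/-- `Nat.card (M ⊓ Z) * M.relIndex Z = Nat.card Z`. -/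
lemma aux_card_inf (M Z : Subgroup G) :
    Nat.card ↥(M ⊓ Z) * M.relIndex Z = Nat.card Z := by
  have h1 : Nat.card (M.subgroupOf Z) * (M.subgroupOf Z).index = Nat.card Z :=
    Subgroup.card_mul_index _
  have h2 : Nat.card (M.subgroupOf Z) = Nat.card ↥(M ⊓ Z) := by
    rw [← Subgroup.inf_subgroupOf_right]
    exact Nat.card_congr (Subgroup.subgroupOfEquivOfLe inf_le_right).toEquiv
  rw [← h1, h2]; rfl

end Aux

/-- Let `G` act faithfully and transitively on a finite set `Ω` with point
stabilizer `G_ω`, and let `h ∈ G` be such that the cyclic subgroup `H = ⟨h⟩` has exactly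
two orbits on `Ω`. If `K ∈ L(G_ω, G)` is `H`-intransitive (i.e. `K·⟨h⟩ ≠ G` as sets),
then `K` is core-complementary: `K = G_ω · core_G(K)` as subsets of `G`. -/
theorem core_complementary_of_H_intransitive {G Ω : Type*} [Group G] [Fintype Ω]
    [MulAction G Ω] [FaithfulSMul G Ω] (htrans : MulAction.IsPretransitive G Ω)
    (ω : Ω) (h : G) (a b : Ω)
    (hab : MulAction.orbit (Subgroup.zpowers h) a ≠ MulAction.orbit (Subgroup.zpowers h) b)
    (horb : ∀ x : Ω, x ∈ MulAction.orbit (Subgroup.zpowers h) a ∨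
      x ∈ MulAction.orbit (Subgroup.zpowers h) b)
    (K : Subgroup G) (hK : MulAction.stabilizer G ω ≤ K)
    (hintr : (K : Set G) * (Subgroup.zpowers h : Set G) ≠ (Set.univ : Set G)) :
    (K : Set G) = (MulAction.stabilizer G ω : Set G) * (K.normalCore : Set G) := by
  classical
  have hG : Finite G := by
    have : Function.Injective (MulAction.toPermHom G Ω) := by
      intro g₁ g₂ hgg
      apply FaithfulSMul.eq_of_smul_eq_smul (α := Ω)
      intro x
      have := congrArg (fun p : Equiv.Perm Ω => p x) hgg
      simpa using this
    exact Finite.of_injective _ this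
  set Z : Subgroup G := Subgroup.zpowers h with hZ
  set M : Subgroup G := K.normalCore with hM
  set Gw : Subgroup G := MulAction.stabilizer G ω with hGw
  -- the projection π : Ω → G ⧸ K
  set π : Ω → G ⧸ K := fun x => ((htrans.exists_smul_eq ω x).choose : G ⧸ K) with hπdef
  have hπspec : ∀ x : Ω, (htrans.exists_smul_eq ω x).choose • ω = x :=
    fun x => (htrans.exists_smul_eq ω x).choose_spec
  have hπ1 : ∀ g : G, π (g • ω) = (g : G ⧸ K) := by
    intro g
    have h1 : (htrans.exists_smul_eq ω (g • ω)).choose • ω = g • ω := hπspec _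
    refine (QuotientGroup.eq).mpr ?_
    apply hK
    rw [MulAction.mem_stabilizer_iff, mul_smul]
    rw [inv_smul_eq_iff, h1]
  have hπequiv : ∀ (g : G) (x : Ω), π (g • x) = g • π x := by
    intro g x
    conv_lhs => rw [← hπspec x, ← mul_smul, hπ1]
    rw [hπdef]
    exact (MulAction.Quotient.smul_mk K g _).symm
  have hπω : π ω = ((1 : G) : G ⧸ K) := by
    have := hπ1 1; simpa using this
  -- membership in the normal core
  have hMmem : ∀ g : G, g ∈ M ↔ ∀ c : G ⧸ K, g • c = c := by
    intro g
    rw [hM, Subgroup.normalCore_eq_ker, MonoidHom.mem_ker]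
    constructor
    · intro hg c
      have := congrArg (fun p : Equiv.Perm (G ⧸ K) => p c) hg
      simpa using this
    · intro hg; ext c; simpa using hg c
  have hMfix : ∀ m ∈ M, ∀ x : Ω, π (m • x) = π x := by
    intro m hm x; rw [hπequiv, (hMmem m).mp hm]
  -- fibers of π
  set F : G ⧸ K → Set Ω := fun c => π ⁻¹' {c} with hF
  set d : ℕ := Nat.card ↥(F (π ω)) with hd
  have hFsmul : ∀ (g : G) (c : G ⧸ K), F (g • c) = g • F c := by
    intro g c
    ext x
    simp only [hF, Set.mem_preimage, Set.mem_singleton_iff, Set.mem_smul_set_iff_inv_smul_mem]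
    constructor
    · intro hx
      rw [hπequiv, hx, inv_smul_smul]
    · intro hx
      have : π x = g • π (g⁻¹ • x) := by rw [← hπequiv, smul_inv_smul]
      rw [this, hx]
  have hFcard : ∀ c : G ⧸ K, Nat.card ↥(F c) = d := by
    intro c
    obtain ⟨g, rfl⟩ := QuotientGroup.mk_surjective c
    have h1 : (g : G ⧸ K) = g • π ω := by
      rw [hπω, MulAction.Quotient.smul_mk, smul_eq_mul, mul_one]
    rw [h1, hFsmul, aux_card_smul_set, hd]
  -- images of orbits
  have horbim : ∀ x : Ω, π '' (MulAction.orbit Z x) = MulAction.orbit Z (π x) := by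
    intro x
    ext c
    constructor
    · rintro ⟨y, ⟨z, rfl⟩, rfl⟩
      exact ⟨z, (hπequiv (z : G) x).symm⟩
    · rintro ⟨z, rfl⟩
      exact ⟨(z : G) • x, ⟨z, rfl⟩, hπequiv (z : G) x⟩
  have hcover : ∀ c : G ⧸ K,
      c ∈ MulAction.orbit Z (π a) ∪ MulAction.orbit Z (π b) := by
    intro c
    obtain ⟨g, rfl⟩ := QuotientGroup.mk_surjective c
    have hc : (g : G ⧸ K) = π (g • ω) := (hπ1 g).symm
    rcases horb (g • ω) with h1 | h1
    · left; rw [← horbim]; exact ⟨g • ω, h1, hc.symm⟩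
    · right; rw [← horbim]; exact ⟨g • ω, h1, hc.symm⟩
  -- H is intransitive on G ⧸ K
  have hproper : MulAction.orbit Z (π ω) ≠ Set.univ := by
    intro hall
    apply hintr
    apply Set.eq_univ_of_forall
    intro g
    have hmem : ((g⁻¹ : G) : G ⧸ K) ∈ MulAction.orbit Z (π ω) := by
      rw [hall]; exact Set.mem_univ _
    obtain ⟨z, hz⟩ := hmem
    have hz2 : (((z : G)) : G ⧸ K) = ((g⁻¹ : G) : G ⧸ K) := by
      rw [← hz]
      show (((z : G)) : G ⧸ K) = (z : G) • π ω
      rw [hπω, MulAction.Quotient.smul_mk, smul_eq_mul, mul_one]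
    have hk : (z : G)⁻¹ * g⁻¹ ∈ K := QuotientGroup.eq.mp hz2
    refine ⟨((z : G)⁻¹ * g⁻¹)⁻¹, K.inv_mem hk, (z : G)⁻¹, Z.inv_mem z.2, ?_⟩
    group
  -- both orbits on G ⧸ K are proper and disjoint
  have hABuniv : MulAction.orbit Z (π a) ∪ MulAction.orbit Z (π b) = Set.univ :=
    Set.eq_univ_of_forall hcover
  have hAorB : MulAction.orbit Z (π ω) = MulAction.orbit Z (π a) ∨
      MulAction.orbit Z (π ω) = MulAction.orbit Z (π b) := by
    rcases horb ω with h1 | h1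
    · left
      apply MulAction.orbit_eq_iff.mpr
      rw [← horbim]; exact ⟨ω, h1, rfl⟩
    · right
      apply MulAction.orbit_eq_iff.mpr
      rw [← horbim]; exact ⟨ω, h1, rfl⟩
  have hAne : MulAction.orbit Z (π a) ≠ Set.univ := by
    intro huniv
    have hb' : MulAction.orbit Z (π b) = MulAction.orbit Z (π a) :=
      MulAction.orbit_eq_iff.mpr (huniv ▸ Set.mem_univ _)
    rcases hAorB with h1 | h1
    · exact hproper (h1.trans huniv)
    · exact hproper (h1.trans (hb'.trans huniv))
  have hBne : MulAction.orbit Z (π b) ≠ Set.univ := by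
    intro huniv
    have hb' : MulAction.orbit Z (π a) = MulAction.orbit Z (π b) :=
      MulAction.orbit_eq_iff.mpr (huniv ▸ Set.mem_univ _)
    rcases hAorB with h1 | h1
    · exact hproper (h1.trans (hb'.trans huniv))
    · exact hproper (h1.trans huniv)
  have hdisj : MulAction.orbit Z (π a) ∩ MulAction.orbit Z (π b) = ∅ := by
    by_contra hne
    rw [← ne_eq, ← Set.nonempty_iff_ne_empty] at hne
    obtain ⟨c, hca, hcb⟩ := hne
    apply hAne
    have h1 : MulAction.orbit Z c = MulAction.orbit Z (π a) := MulAction.orbit_eq_iff.mpr hca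
    have h2 : MulAction.orbit Z c = MulAction.orbit Z (π b) := MulAction.orbit_eq_iff.mpr hcb
    have heq : MulAction.orbit Z (π a) = MulAction.orbit Z (π b) := by rw [← h1, h2]
    rw [← hABuniv, heq, Set.union_self]
  -- fibers over the orbit of π x are contained in the orbit of x
  have hfibsub : ∀ x y : Ω, (∀ u : Ω, u ∈ MulAction.orbit Z x ∨ u ∈ MulAction.orbit Z y) →
      (MulAction.orbit Z (π x) ∩ MulAction.orbit Z (π y) = ∅) →
      ∀ c ∈ MulAction.orbit Z (π x), F c ⊆ MulAction.orbit Z x := by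
    intro x y hcov hdis c hc u hu
    rcases hcov u with h1 | h1
    · exact h1
    · exfalso
      have h2 : π u ∈ MulAction.orbit Z (π y) := by
        rw [← horbim]; exact ⟨u, h1, rfl⟩
      have hu' : π u = c := hu
      rw [hu'] at h2
      have : c ∈ MulAction.orbit Z (π x) ∩ MulAction.orbit Z (π y) := ⟨hc, h2⟩
      rw [hdis] at this
      exact this
  -- the counting |orbit Z x| = d * |orbit Z (π x)|
  have hcount : ∀ x : Ω, (∀ c ∈ MulAction.orbit Z (π x), F c ⊆ MulAction.orbit Z x) →
      Nat.card ↥(MulAction.orbit Z x) = d * Nat.card ↥(MulAction.orbit Z (π x)) := by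
    intro x hsub
    have hfinA : (MulAction.orbit Z x).Finite := Set.toFinite _
    have hfinC : (MulAction.orbit Z (π x)).Finite := Set.toFinite _
    have hmapsto : ∀ u ∈ hfinA.toFinset, π u ∈ hfinC.toFinset := by
      intro u hu
      rw [Set.Finite.mem_toFinset] at *
      rw [← horbim]
      exact ⟨u, hu, rfl⟩
    have hsum := Finset.card_eq_sum_card_fiberwise hmapsto
    have hfibcard : ∀ c ∈ hfinC.toFinset,
        (hfinA.toFinset.filter (fun u => π u = c)).card = d := by
      intro c hc
      rw [Set.Finite.mem_toFinset] at hc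
      have heq : hfinA.toFinset.filter (fun u => π u = c) = (F c).toFinset := by
        ext u
        simp only [Finset.mem_filter, Set.Finite.mem_toFinset, Set.mem_toFinset]
        constructor
        · rintro ⟨-, h2⟩; exact h2
        · intro h1; exact ⟨hsub c hc h1, h1⟩
      rw [heq, Set.toFinset_card, ← Nat.card_eq_fintype_card, hFcard]
    rw [Finset.sum_congr rfl hfibcard, Finset.sum_const, smul_eq_mul] at hsum
    rw [Nat.card_coe_set_eq, Set.ncard_eq_toFinset_card _ hfinA, hsum,
      Nat.card_coe_set_eq, Set.ncard_eq_toFinset_card _ hfinC, mul_comm]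
  -- minimal periods
  set p1 : ℕ := Function.minimalPeriod (fun c : G ⧸ K => h • c) (π a) with hp1
  set p2 : ℕ := Function.minimalPeriod (fun c : G ⧸ K => h • c) (π b) with hp2
  have hcardp : ∀ x : Ω, Nat.card ↥(MulAction.orbit Z (π x)) =
      Function.minimalPeriod (fun c : G ⧸ K => h • c) (π x) := by
    intro x
    haveI : Fintype ↥(MulAction.orbit (Subgroup.zpowers h) (π x)) := Fintype.ofFinite _
    rw [Nat.card_eq_fintype_card]
    exact (@MulAction.minimalPeriod_eq_card _ _ _ h _ (π x) this).symm
  have htriv : ∀ (c₀ : G ⧸ K) (n : ℤ), h ^ n • c₀ = c₀ →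
      ∀ c ∈ MulAction.orbit Z c₀, h ^ n • c = c := by
    intro c₀ n hn c hc
    obtain ⟨z, rfl⟩ := hc
    obtain ⟨k, hk⟩ := Subgroup.mem_zpowers_iff.mp z.2
    show h ^ n • ((z : G) • c₀) = (z : G) • c₀
    rw [← hk, smul_smul, zpow_mul_comm, ← smul_smul, hn]
  have hMpow : ∀ n : ℤ, h ^ n ∈ M ↔ ((p1 : ℤ) ∣ n ∧ (p2 : ℤ) ∣ n) := by
    intro n
    rw [hMmem]
    constructor
    · intro hfix
      exact ⟨(MulAction.zpow_smul_eq_iff_minimalPeriod_dvd).mp (hfix (π a)),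
        (MulAction.zpow_smul_eq_iff_minimalPeriod_dvd).mp (hfix (π b))⟩
    · rintro ⟨h1, h2⟩ c
      rcases hcover c with hc | hc
      · exact htriv (π a) n ((MulAction.zpow_smul_eq_iff_minimalPeriod_dvd).mpr h1) c hc
      · exact htriv (π b) n ((MulAction.zpow_smul_eq_iff_minimalPeriod_dvd).mpr h2) c hc
  set L : ℕ := Nat.lcm p1 p2 with hL
  have hMZ : M ⊓ Z = Subgroup.zpowers (h ^ L) := by
    apply le_antisymm
    · rintro x ⟨hxM, hxZ⟩
      obtain ⟨n, rfl⟩ := Subgroup.mem_zpowers_iff.mp hxZ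
      obtain ⟨hd1, hd2⟩ := (hMpow n).mp hxM
      have hdL : ((L : ℕ) : ℤ) ∣ n := by
        have := Nat.lcm_dvd (Int.natCast_dvd.mp hd1) (Int.natCast_dvd.mp hd2)
        exact Int.natCast_dvd.mpr (by simpa [hL] using this)
      obtain ⟨s, rfl⟩ := hdL
      refine Subgroup.mem_zpowers_iff.mpr ⟨s, ?_⟩
      rw [← zpow_natCast h L, ← zpow_mul]
    · rw [Subgroup.zpowers_le]
      refine ⟨?_, Subgroup.pow_mem _ (Subgroup.mem_zpowers h) L⟩
      have : h ^ (L : ℤ) ∈ M := (hMpow (L : ℤ)).mpr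
        ⟨Int.natCast_dvd_natCast.mpr (Nat.dvd_lcm_left p1 p2),
         Int.natCast_dvd_natCast.mpr (Nat.dvd_lcm_right p1 p2)⟩
      simpa [zpow_natCast] using this
  -- the order of h
  have hopos : 0 < orderOf h := orderOf_pos h
  have hp1o : p1 ∣ orderOf h := by
    apply MulAction.pow_smul_eq_iff_minimalPeriod_dvd.mp
    rw [pow_orderOf_eq_one, one_smul]
  have hp2o : p2 ∣ orderOf h := by
    apply MulAction.pow_smul_eq_iff_minimalPeriod_dvd.mp
    rw [pow_orderOf_eq_one, one_smul]
  have hLo : L ∣ orderOf h := Nat.lcm_dvd hp1o hp2o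
  have hcardZ : Nat.card Z = orderOf h := Nat.card_zpowers h
  have hcardMZ : Nat.card ↥(M ⊓ Z) = orderOf h / L := by
    rw [hMZ, Nat.card_zpowers, orderOf_pow, Nat.gcd_eq_right hLo]
  have hrel : M.relIndex Z = L := by
    have h1 := aux_card_inf M Z
    rw [hcardMZ, hcardZ] at h1
    have h2 : orderOf h / L * L = orderOf h := Nat.div_mul_cancel hLo
    have h3 : 0 < orderOf h / L := by
      rcases Nat.eq_zero_or_pos (orderOf h / L) with h0 | h0
      · rw [h0, zero_mul] at h2; exact absurd h2.symm hopos.ne'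
      · exact h0
    exact Nat.eq_of_mul_eq_mul_left h3 (h1.trans h2.symm)
  haveI hMnormal : M.Normal := Subgroup.normalCore_normal K
  have hcardX : Nat.card ↥(M ⊔ Z) = Nat.card M * L := by
    rw [aux_card_sup M Z, hrel]
  -- orbits of M ⊔ Z coincide with orbits of Z
  have horbX : ∀ x : Ω, (∀ c ∈ MulAction.orbit Z (π x), F c ⊆ MulAction.orbit Z x) →
      MulAction.orbit ↥(M ⊔ Z) x = MulAction.orbit Z x := by
    intro x hsub
    apply Set.Subset.antisymm
    · rintro u ⟨g, rfl⟩
      have hg : (g : G) ∈ (Z : Set G) * (M : Set G) := by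
        have hgg : (g : G) ∈ Z ⊔ M := by rw [sup_comm]; exact g.2
        have hgg2 : (g : G) ∈ ((Z ⊔ M : Subgroup G) : Set G) := hgg
        rwa [Subgroup.mul_normal Z M] at hgg2
      obtain ⟨z, hz, m, hm, hzm⟩ := hg
      have h1 : m • x ∈ F (π x) := hMfix m hm x
      have h3 : m • x ∈ MulAction.orbit Z x := hsub (π x) (MulAction.mem_orbit_self _) h1
      obtain ⟨z', hz'⟩ := h3
      refine ⟨⟨z * (z' : G), Z.mul_mem hz z'.2⟩, ?_⟩
      show (z * (z' : G)) • x = (g : G) • x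
      have hz'' : (z' : G) • x = m • x := hz'
      have hzm' : z * m = (g : G) := hzm
      rw [mul_smul, hz'', ← mul_smul, hzm']
    · rintro u ⟨z, rfl⟩
      exact ⟨⟨(z : G), (le_sup_right : Z ≤ M ⊔ Z) z.2⟩, rfl⟩
  -- all orbits of the normal subgroup M have the same size
  set e : ℕ := Nat.card ↥(MulAction.orbit M ω) with he
  have hMorb : ∀ x : Ω, Nat.card ↥(MulAction.orbit M x) = e := by
    intro x
    obtain ⟨g, rfl⟩ := htrans.exists_smul_eq ω x
    have horb' : MulAction.orbit ↥M (g • ω) = g • MulAction.orbit ↥M ω := by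
      ext u
      rw [Set.mem_smul_set_iff_inv_smul_mem]
      constructor
      · rintro ⟨m, rfl⟩
        refine ⟨⟨g⁻¹ * (m : G) * g, by simpa using hMnormal.conj_mem (m : G) m.2 g⁻¹⟩, ?_⟩
        show (g⁻¹ * (m : G) * g) • ω = g⁻¹ • ((m : G) • g • ω)
        simp [mul_smul]
      · rintro ⟨m, hm⟩
        refine ⟨⟨g * (m : G) * g⁻¹, hMnormal.conj_mem (m : G) m.2 g⟩, ?_⟩
        have hm' : (m : G) • ω = g⁻¹ • u := hm
        show (g * (m : G) * g⁻¹) • (g • ω) = u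
        rw [mul_smul, mul_smul, inv_smul_smul, hm', smul_inv_smul]
    rw [horb', aux_card_smul_set]
  -- main divisibility
  have hmain : ∀ x : Ω, (∀ c ∈ MulAction.orbit Z (π x), F c ⊆ MulAction.orbit Z x) →
      d * Nat.card ↥(MulAction.orbit Z (π x)) ∣ e * L := by
    intro x hsub
    have h1 := aux_orbit_stabilizer (M ⊔ Z) x
    rw [horbX x hsub, hcount x hsub, hcardX] at h1
    have h2 := aux_orbit_stabilizer M x
    rw [hMorb x] at h2
    obtain ⟨t, ht⟩ := Subgroup.card_dvd_of_le
      (inf_le_inf_right (MulAction.stabilizer G x) (le_sup_left : M ≤ M ⊔ Z))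
    have hpos : 0 < Nat.card ↥(M ⊓ MulAction.stabilizer G x) := Nat.card_pos
    refine ⟨t, ?_⟩
    rw [ht, ← h2] at h1
    apply (Nat.eq_of_mul_eq_mul_right hpos _).symm
    calc d * Nat.card ↥(MulAction.orbit Z (π x)) * t * Nat.card ↥(M ⊓ MulAction.stabilizer G x)
        = d * Nat.card ↥(MulAction.orbit Z (π x)) *
            (Nat.card ↥(M ⊓ MulAction.stabilizer G x) * t) := by ring
      _ = e * Nat.card ↥(M ⊓ MulAction.stabilizer G x) * L := h1
      _ = e * L * Nat.card ↥(M ⊓ MulAction.stabilizer G x) := by ring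
  have hsubA : ∀ c ∈ MulAction.orbit Z (π a), F c ⊆ MulAction.orbit Z a :=
    hfibsub a b horb hdisj
  have hsubB : ∀ c ∈ MulAction.orbit Z (π b), F c ⊆ MulAction.orbit Z b := by
    refine hfibsub b a (fun u => (horb u).symm) ?_
    rw [Set.inter_comm]; exact hdisj
  have hdvd1 := hmain a hsubA
  have hdvd2 := hmain b hsubB
  rw [hcardp a] at hdvd1
  rw [hcardp b] at hdvd2
  have hdL : d * L ∣ e * L := by
    rw [hL, ← Nat.lcm_mul_left]
    exact Nat.lcm_dvd hdvd1 hdvd2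
  haveI : Nonempty ↥(MulAction.orbit Z (π a)) := ⟨⟨π a, MulAction.mem_orbit_self _⟩⟩
  have hp1pos : 0 < p1 := by rw [hp1, ← hcardp a]; exact Nat.card_pos
  haveI : Nonempty ↥(MulAction.orbit Z (π b)) := ⟨⟨π b, MulAction.mem_orbit_self _⟩⟩
  have hp2pos : 0 < p2 := by rw [hp2, ← hcardp b]; exact Nat.card_pos
  have hLpos : 0 < L := Nat.pos_of_ne_zero (Nat.lcm_ne_zero hp1pos.ne' hp2pos.ne')
  have hde : d ∣ e := (Nat.mul_dvd_mul_iff_right hLpos).mp hdL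
  have hsubMF : MulAction.orbit ↥M ω ⊆ F (π ω) := by
    rintro u ⟨m, rfl⟩
    exact hMfix (m : G) m.2 ω
  have hed : e ≤ d := by
    rw [he, hd, Nat.card_coe_set_eq, Nat.card_coe_set_eq]
    exact Set.ncard_le_ncard hsubMF (Set.toFinite _)
  haveI : Nonempty ↥(MulAction.orbit M ω) := ⟨⟨ω, MulAction.mem_orbit_self _⟩⟩
  have hepos : 0 < e := by rw [he]; exact Nat.card_pos
  have hde' : d = e := le_antisymm (Nat.le_of_dvd hepos hde) hed
  have horbF : MulAction.orbit ↥M ω = F (π ω) := by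
    refine Set.eq_of_subset_of_ncard_le hsubMF ?_ (Set.toFinite _)
    rw [← Nat.card_coe_set_eq, ← Nat.card_coe_set_eq, ← hd, ← he, hde']
  -- conclusion
  apply Set.Subset.antisymm
  · intro k hk
    have hk' : k ∈ K := hk
    have h1 : π (k • ω) = π ω := by
      rw [hπequiv, hπω]
      show k • ((1 : G) : G ⧸ K) = ((1 : G) : G ⧸ K)
      rw [MulAction.Quotient.smul_mk, smul_eq_mul, mul_one]
      exact (QuotientGroup.eq).mpr (by simpa using K.inv_mem hk')
    have h2 : k • ω ∈ F (π ω) := h1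
    rw [← horbF] at h2
    obtain ⟨m, hm⟩ := h2
    have hm' : (m : G) • ω = k • ω := hm
    have h3 : (m : G)⁻¹ * k ∈ Gw := by
      rw [hGw, MulAction.mem_stabilizer_iff, mul_smul, ← hm', inv_smul_smul]
    have h4 : k = (m : G) * ((m : G)⁻¹ * k) := by group
    rw [← Subgroup.mul_normal Gw M, h4]
    exact Subgroup.mul_mem _ ((le_sup_right : M ≤ Gw ⊔ M) m.2)
      ((le_sup_left : Gw ≤ Gw ⊔ M) h3)
  · rintro g ⟨s, hs, m, hm, rfl⟩
    exact K.mul_mem (hK hs) (K.normalCore_le hm)
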